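/- For any finite word W, the minimal period of W satisfies π_W ≥ R_W + 1, where R_W is the smallest integer p such that W has no right special factor of length p. -/

import Mathlib

open List

variable {α : Type*} [DecidableEq α]

/-- The set of factors (contiguous subwords) of `W`. -/
def factorFinset (W : List α) : Finset (List α) := (W.inits.flatMap List.tails).toFinset

/-- A palindrome is a word equal to its reversal. -/
def Pal (u : List α) : Prop := u.reverse = u

instance : DecidablePred (Pal : List α → Prop) :=
  fun u => inferInstanceAs (Decidable (u.reverse = u))

/-- The set of palindromic factors of `W` (including the empty word). -/
def palFactorFinset (W : List α) : Finset (List α) := (factorFinset W).filter Pal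

/-- Subword complexity: the number of distinct factors of `W` of length `n`. -/
def C (W : List α) (n : ℕ) : ℕ := ((factorFinset W).filter (fun u => u.length = n)).card

/-- Palindromic complexity: number of distinct palindromic factors of `W` of length `n`. -/
def P (W : List α) (n : ℕ) : ℕ := ((palFactorFinset W).filter (fun u => u.length = n)).card

/-- A word is rich if it has exactly `|W| + 1` distinct palindromic factors. -/
def Rich (W : List α) : Prop := (palFactorFinset W).card = W.length + 1

/-- Number of occurrences of `u` as a factor of `W`. -/
def occ (u W : List α) : ℕ := ((List.range (W.length + 1)).filter (fun i => u <+: W.drop i)).length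

/-- `Z` is a complete return to `u` in `W`: a factor of `W` with exactly two
occurrences of `u`, one as a prefix and one as a suffix. -/
def CompleteReturn (u Z W : List α) : Prop := Z <:+: W ∧ u <+: Z ∧ u <:+ Z ∧ occ u Z = 2

/-- `u` is a right special factor of `W`. -/
def RightSpecial (u W : List α) : Prop :=
  ∃ x y : α, x ≠ y ∧ (u ++ [x]) <:+: W ∧ (u ++ [y]) <:+: W

/-- `R_W`: the smallest `p` such that `W` has no right special factor of length `p`. -/
noncomputable def RW (W : List α) : ℕ := sInf {p : ℕ | ∀ u : List α, u.length = p → ¬ RightSpecial u W}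

/-- `K_W`: the length of the shortest suffix of `W` occurring exactly once in `W`. -/
noncomputable def KW (W : List α) : ℕ := sInf {k : ℕ | ∃ u : List α, u <:+ W ∧ u.length = k ∧ occ u W = 1}

/-- A word is trapezoidal if `|W| = R_W + K_W`. -/
def Trapezoidal (W : List α) : Prop := W.length = RW W + KW W

/-- The minimal period of `W`. -/
noncomputable def minPeriod (W : List α) : ℕ :=
  sInf {q : ℕ | 0 < q ∧ ∀ i : ℕ, i + q < W.length → W[i]? = W[i + q]?}

/-- A binary word is balanced if the number of occurrences of a letter in two
factors of equal length differ by at most 1. -/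
def BalancedWord (W : List Bool) : Prop :=
  ∀ u v : List Bool, u <:+: W → v <:+: W → u.length = v.length →
    u.count true ≤ v.count true + 1


private lemma cycle_lemma4 {β : Type*} (g : ℕ → β) (q d : ℕ) (hq : 0 < q) (hd : d % q ≠ 0)
    (hper : ∀ t, g (t + q) = g t)
    (hshift : ∀ t, t % q ≠ q - 1 → g (t + d) = g t) :
    g (q - 1 + d) = g (q - 1) := by
  have hperm : ∀ m t, g (t + q * m) = g t := by
    intro m
    induction m with
    | zero => simp
    | succ n ih => intro t; rw [Nat.mul_succ, ← Nat.add_assoc, hper, ih]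
  have hmodg : ∀ t, g t = g (t % q) := by
    intro t
    conv_lhs => rw [← Nat.mod_add_div t q]
    exact hperm _ _
  have hex : ∃ s, 0 < s ∧ s * d % q = 0 := ⟨q, hq, Nat.mul_mod_right q d⟩
  set k := Nat.find hex with hkdef
  obtain ⟨hkpos, hk0⟩ := Nat.find_spec hex
  have key : ∀ s, 0 < s → s ≤ k → g (q - 1 + s * d) = g (q - 1 + d) := by
    intro s
    induction s with
    | zero => omega
    | succ n ih =>
      intro _ hsk
      rcases Nat.eq_zero_or_pos n with hn | hn
      · subst hn; simp
      · have hnk : n < k := by omega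
        have hnd : n * d % q ≠ 0 := fun h => Nat.find_min hex hnk ⟨hn, h⟩
        have hmodne : (q - 1 + n * d) % q ≠ q - 1 := by
          intro h
          have hr : 0 < n * d % q := Nat.pos_of_ne_zero hnd
          have hrq : n * d % q < q := Nat.mod_lt _ hq
          have h1 : (q - 1 + n * d) % q = (q - 1 + n * d % q) % q :=
            (Nat.add_mod_mod _ _ _).symm
          have h2 : (q - 1 + n * d % q) % q = n * d % q - 1 := by
            rw [Nat.mod_eq_sub_mod (by omega), Nat.mod_eq_of_lt (by omega)]
            omega
          omega
        have harr : q - 1 + (n + 1) * d = (q - 1 + n * d) + d := by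
          rw [Nat.succ_mul]; omega
        rw [harr, hshift _ hmodne, ih hn (by omega)]
  have hfin : g (q - 1 + k * d) = g (q - 1) := by
    rw [hmodg (q - 1 + k * d), ← Nat.add_mod_mod, hk0, Nat.add_zero,
      Nat.mod_eq_of_lt (by omega : q - 1 < q)]
  rw [← key k hkpos le_rfl, hfin]

private lemma infix_getElem?4 {α : Type*} {v W : List α} (h : v <:+: W) :
    ∃ i, i + v.length ≤ W.length ∧ ∀ k, k < v.length → W[i + k]? = v[k]? := by
  obtain ⟨s, t, rfl⟩ := h
  refine ⟨s.length, by simp, fun k hk => ?_⟩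
  rw [show s ++ v ++ t = s ++ (v ++ t) by simp,
    List.getElem?_append_right (by omega : s.length ≤ s.length + k)]
  simp only [Nat.add_sub_cancel_left]
  rw [List.getElem?_append, if_pos hk]

theorem stmt4 {α : Type*} [DecidableEq α] (W : List α) : RW W + 1 ≤ minPeriod W := by
  have hne : {q : ℕ | 0 < q ∧ ∀ i : ℕ, i + q < W.length → W[i]? = W[i + q]?}.Nonempty :=
    ⟨W.length + 1, by refine ⟨by omega, fun i hi => by omega⟩⟩
  have hmem : 0 < minPeriod W ∧
      ∀ i : ℕ, i + minPeriod W < W.length → W[i]? = W[i + minPeriod W]? :=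
    Nat.sInf_mem hne
  obtain ⟨hq0, hper⟩ := hmem
  set q := minPeriod W with hqdef
  have hmod : ∀ p, p < W.length → W[p]? = W[p % q]? := by
    intro p
    induction p using Nat.strong_induction_on with
    | _ p ih =>
      intro hp
      rcases lt_or_ge p q with h | h
      · rw [Nat.mod_eq_of_lt h]
      · have h1 : (p - q) + q = p := by omega
        have h2 := hper (p - q) (by omega)
        rw [h1] at h2
        rw [← h2, ih (p - q) (by omega) (by omega), Nat.mod_eq_sub_mod h]
  have hkey : ∀ u : List α, u.length = q - 1 → ¬ RightSpecial u W := by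
    rintro u hu ⟨x, y, hxy, hx, hy⟩
    obtain ⟨i, hile, hi⟩ := infix_getElem?4 hx
    obtain ⟨j, hjle, hj⟩ := infix_getElem?4 hy
    have hlenx : (u ++ [x]).length = q := by simp [hu]; omega
    have hleny : (u ++ [y]).length = q := by simp [hu]; omega
    rw [hlenx] at hile hi
    rw [hleny] at hjle hj
    have hWq : q ≤ W.length := by omega
    have hxval : W[(i + (q - 1)) % q]? = some x := by
      rw [← hmod _ (Nat.lt_of_lt_of_le (by omega) hile), hi (q - 1) (by omega),
        List.getElem?_append_right (by omega : u.length ≤ q - 1)]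
      rw [hu]
      simp
    have hyval : W[(j + (q - 1)) % q]? = some y := by
      rw [← hmod _ (Nat.lt_of_lt_of_le (by omega) hjle), hj (q - 1) (by omega),
        List.getElem?_append_right (by omega : u.length ≤ q - 1)]
      rw [hu]
      simp
    have hufact : ∀ t, t < q - 1 → W[(i + t) % q]? = W[(j + t) % q]? := by
      intro t ht
      rw [← hmod _ (Nat.lt_of_lt_of_le (by omega) hile),
        ← hmod _ (Nat.lt_of_lt_of_le (by omega) hjle),
        hi t (by omega), hj t (by omega),
        List.getElem?_append, if_pos (by omega : t < u.length),
        List.getElem?_append, if_pos (by omega : t < u.length)]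
    by_cases hres : i % q = j % q
    · apply hxy
      have heq : (i + (q - 1)) % q = (j + (q - 1)) % q := by
        rw [Nat.add_mod, hres, ← Nat.add_mod]
      rw [heq, hyval] at hxval
      exact (Option.some_injective _ hxval).symm
    · set Q := q * (i + 1) with hQdef
      have hQi : i < Q := by
        have : i + 1 ≤ Q := Nat.le_mul_of_pos_left (i + 1) hq0
        omega
      set d := j + Q - i with hddef
      have hid : i + d = j + Q := by omega
      have harr : ∀ t, (i + (t + d)) % q = (j + t) % q := by
        intro t
        have h1 : i + (t + d) = (j + t) + q * (i + 1) := by omega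
        rw [h1, Nat.add_mul_mod_self_left]
      have hdmod : d % q ≠ 0 := by
        intro h0
        apply hres
        have h1 : (i + d) % q = j % q := by rw [hid, hQdef, Nat.add_mul_mod_self_left]
        obtain ⟨c, hc⟩ := Nat.dvd_of_mod_eq_zero h0
        rw [hc, Nat.add_mul_mod_self_left] at h1
        exact h1
      set g : ℕ → Option α := fun t => W[(i + t) % q]? with hgdef
      have hperg : ∀ t, g (t + q) = g t := by
        intro t
        simp only [hgdef]
        rw [show i + (t + q) = (i + t) + q by omega, Nat.add_mod_right]
      have hshift : ∀ t, t % q ≠ q - 1 → g (t + d) = g t := by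
        intro t ht
        have ht' : t % q < q - 1 := by
          have := Nat.mod_lt t hq0
          omega
        simp only [hgdef]
        rw [harr t, ← Nat.add_mod_mod j t q, ← Nat.add_mod_mod i t q]
        exact (hufact (t % q) ht').symm
      have := cycle_lemma4 g q d hq0 hdmod hperg hshift
      simp only [hgdef] at this
      rw [harr (q - 1)] at this
      rw [hyval, hxval] at this
      exact hxy (Option.some_injective _ this).symm
  have hR : RW W ≤ q - 1 := Nat.sInf_le hkey
  omega
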